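/- Let G = (g₀,...,g_s) be the minimal reduced lexicographic Gröbner basis (y ≻ x) of a zero-dimensional ideal I ⊆ K[x,y] with initial terms y^{n₀}, x^{m₁}y^{n₁}, ..., x^{m_s}. Then for each i there exist monic polynomials D₁,...,D_s ∈ K[x] of degrees d_i = m_i - m_{i-1} such that g_i = M_i G_i with M_i = D₁···D_i and G_i ∈ K[x,y] monic of degree n_i in y; in particular g_s = D₁···D_s ∈ K[x] and the polynomial coefficient of y^{n_i} in g_i equals M_i. -/

import Mathlib

open Polynomial


/-- Lazard's structure theorem. We represent `K[x,y]` as `K[x][y] = Polynomial (Polynomial K)`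
(with `y` the outer variable); under the lexicographic order `y ≻ x`, the initial monomial
of a nonzero `f` is `x^(f.leadingCoeff.natDegree) * y^(f.natDegree)`.  If `g 0, ..., g s`
is the minimal reduced lex Gröbner basis of a zero-dimensional ideal `I`, with initial
terms `x^(m i) y^(n i)`, then there are monic `D i ∈ K[x]` of degrees `m i - m (i-1)` such
that `g i = (D 1 ⋯ D i) * G i` with `G i` monic of degree `n i` in `y`; in particular
`g s = D 1 ⋯ D s ∈ K[x]` and the coefficient of `y^(n i)` in `g i` is `M i = D 1 ⋯ D i`. -/
theorem stmt10 {K : Type*} [Field K] (s : ℕ) (m n : ℕ → ℕ)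
    (I : Ideal (Polynomial (Polynomial K))) (g : ℕ → Polynomial (Polynomial K))
    (hm0 : m 0 = 0) (hns : n s = 0)
    (hm : ∀ i < s, m i < m (i + 1)) (hn : ∀ i < s, n (i + 1) < n i)
    (hfin : FiniteDimensional K (Polynomial (Polynomial K) ⧸ I))
    (hmem : ∀ i ≤ s, g i ∈ I)
    (hdeg : ∀ i ≤ s, (g i).natDegree = n i)
    (hlc : ∀ i ≤ s, (g i).leadingCoeff.Monic ∧ (g i).leadingCoeff.natDegree = m i)
    (hGB : ∀ f ∈ I, f ≠ 0 → ∃ i ≤ s, m i ≤ f.leadingCoeff.natDegree ∧ n i ≤ f.natDegree)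
    (hred : ∀ i ≤ s, ∀ j ≤ s, ∀ u v : ℕ, ((g i).coeff v).coeff u ≠ 0 →
      m j ≤ u → n j ≤ v → i = j ∧ u = m i ∧ v = n i) :
    ∃ D : ℕ → Polynomial K,
      (∀ i, 1 ≤ i → i ≤ s → (D i).Monic ∧ (D i).natDegree = m i - m (i - 1)) ∧
      (∀ i ≤ s, ∃ G : Polynomial (Polynomial K), G.Monic ∧ G.natDegree = n i ∧
        g i = Polynomial.C (∏ j ∈ Finset.Icc 1 i, D j) * G) ∧
      g s = Polynomial.C (∏ j ∈ Finset.Icc 1 s, D j) ∧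
      (∀ i ≤ s, (g i).coeff (n i) = ∏ j ∈ Finset.Icc 1 i, D j) := by
  classical
  have hMne : ∀ i, i ≤ s → (g i).leadingCoeff ≠ 0 := fun i hi => (hlc i hi).1.ne_zero
  have hgne : ∀ i, i ≤ s → g i ≠ 0 := fun i hi => leadingCoeff_ne_zero.mp (hMne i hi)
  -- monotonicity of n and m
  have nmono : ∀ i j : ℕ, i ≤ j → j ≤ s → n j ≤ n i := by
    have H : ∀ t i, i + t ≤ s → n (i + t) ≤ n i := by
      intro t
      induction t with
      | zero => intro i _; simp
      | succ t ih =>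
        intro i h
        have h1 : n (i + t + 1) < n (i + t) := hn (i + t) (by omega)
        have h2 := ih i (by omega)
        have : i + (t + 1) = i + t + 1 := by omega
        rw [this]; omega
    intro i j hij hjs
    have := H (j - i) i (by omega)
    rwa [Nat.add_sub_cancel' hij] at this
  have nstrict : ∀ i j : ℕ, i < j → j ≤ s → n j < n i := by
    intro i j hij hjs
    exact lt_of_le_of_lt (nmono (i + 1) j hij hjs) (hn i (by omega))
  have mmono : ∀ i j : ℕ, i ≤ j → j ≤ s → m i ≤ m j := by
    have H : ∀ t i, i + t ≤ s → m i ≤ m (i + t) := by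
      intro t
      induction t with
      | zero => intro i _; simp
      | succ t ih =>
        intro i h
        have h1 : m (i + t) < m (i + t + 1) := hm (i + t) (by omega)
        have h2 := ih i (by omega)
        have : i + (t + 1) = i + t + 1 := by omega
        rw [this]; omega
    intro i j hij hjs
    have := H (j - i) i (by omega)
    rwa [Nat.add_sub_cancel' hij] at this
  -- if t divides a and deg a ≤ deg t then a divides t
  have unit_quot : ∀ a t : Polynomial K, a ≠ 0 → t ∣ a → a.natDegree ≤ t.natDegree → a ∣ t := by
    intro a t ha hta hd
    obtain ⟨u, hu⟩ := hta
    have ht0 : t ≠ 0 := by rintro rfl; rw [zero_mul] at hu; exact ha hu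
    have hu0 : u ≠ 0 := by rintro rfl; rw [mul_zero] at hu; exact ha hu
    have hdm : a.natDegree = t.natDegree + u.natDegree := by rw [hu, natDegree_mul ht0 hu0]
    have hu0' : u.natDegree = 0 := by omega
    obtain ⟨c, hc⟩ := natDegree_eq_zero.mp hu0'
    have hcne : c ≠ 0 := by rintro rfl; rw [map_zero] at hc; exact hu0 hc.symm
    refine ⟨C c⁻¹, ?_⟩
    rw [hu, ← hc, mul_assoc, ← C_mul, mul_inv_cancel₀ hcne, C_1, mul_one]
  -- divisibility chain of leading coefficients
  have hchain1 : ∀ i, i < s → (g i).leadingCoeff ∣ (g (i + 1)).leadingCoeff := by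
    intro i hi
    set a := (g i).leadingCoeff with ha
    set b := (g (i + 1)).leadingCoeff with hb
    have his : i ≤ s := by omega
    have hi1s : i + 1 ≤ s := by omega
    set gc := EuclideanDomain.gcd a b with hgc
    have hbez : gc = a * EuclideanDomain.gcdA a b + b * EuclideanDomain.gcdB a b :=
      EuclideanDomain.gcd_eq_gcd_ab a b
    have hgcne : gc ≠ 0 := by
      intro h
      exact hMne i his (EuclideanDomain.gcd_eq_zero_iff.mp h).1
    set f := C (EuclideanDomain.gcdA a b) * g i
      + C (EuclideanDomain.gcdB a b) * (g (i + 1) * X ^ (n i - n (i + 1))) with hf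
    have hfI : f ∈ I := I.add_mem (I.mul_mem_left _ (hmem i his))
      (I.mul_mem_left _ (I.mul_mem_right _ (hmem (i + 1) hi1s)))
    have hnle : n (i + 1) ≤ n i := le_of_lt (hn i hi)
    have hcoefff : f.coeff (n i) = gc := by
      rw [hf, coeff_add, coeff_C_mul, coeff_C_mul, coeff_mul_X_pow',
        if_pos (Nat.sub_le _ _), Nat.sub_sub_self hnle, hbez]
      have h1 : (g i).coeff (n i) = a := by rw [ha, ← hdeg i his]; rfl
      have h2 : (g (i + 1)).coeff (n (i + 1)) = b := by rw [hb, ← hdeg (i + 1) hi1s]; rfl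
      rw [h1, h2]; ring
    have hfdegle : f.natDegree ≤ n i := by
      refine le_trans (natDegree_add_le _ _) (max_le ?_ ?_)
      · exact le_trans (natDegree_C_mul_le _ _) (le_of_eq (hdeg i his))
      · refine le_trans (natDegree_C_mul_le _ _) (le_trans (natDegree_mul_le) ?_)
        rw [hdeg (i + 1) hi1s, natDegree_X_pow]; omega
    have hfne : f ≠ 0 := fun h => hgcne (by rw [← hcoefff, h, coeff_zero])
    have hfdeg : f.natDegree = n i :=
      le_antisymm hfdegle (le_natDegree_of_ne_zero (by rw [hcoefff]; exact hgcne))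
    have hflc : f.leadingCoeff = gc := by rw [Polynomial.leadingCoeff, hfdeg, hcoefff]
    obtain ⟨j, hjs, hjm, hjn⟩ := hGB f hfI hfne
    rw [hfdeg] at hjn
    have hij : i ≤ j := by
      by_contra h
      exact absurd hjn (not_le.mpr (nstrict j i (by omega) his))
    have hmj : m i ≤ gc.natDegree := by
      rw [hflc] at hjm
      exact le_trans (mmono i j hij hjs) hjm
    have hdle : a.natDegree ≤ gc.natDegree := by rw [(hlc i his).2]; exact hmj
    have hadvd : a ∣ gc :=
      unit_quot a gc (hMne i his) (EuclideanDomain.gcd_dvd_left a b) hdle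
    exact hadvd.trans (EuclideanDomain.gcd_dvd_right a b)
  have hchain : ∀ i j : ℕ, i ≤ j → j ≤ s → (g i).leadingCoeff ∣ (g j).leadingCoeff := by
    have H : ∀ t i, i + t ≤ s → (g i).leadingCoeff ∣ (g (i + t)).leadingCoeff := by
      intro t
      induction t with
      | zero => intro i _; simp
      | succ t ih =>
        intro i h
        have h1 := hchain1 (i + t) (by omega)
        have h2 := ih i (by omega)
        have he : i + (t + 1) = i + t + 1 := by omega
        rw [he]
        exact h2.trans h1
    intro i j hij hjs
    have := H (j - i) i (by omega)
    rwa [Nat.add_sub_cancel' hij] at this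
  -- main claim: the leading coefficient of g i divides every coefficient of g i
  have key : ∀ d i, i ≤ s → s ≤ i + d → ∀ v, (g i).leadingCoeff ∣ (g i).coeff v := by
    intro d
    induction d with
    | zero =>
      intro i his hsi v
      have hieq : i = s := by omega
      have hd0 : (g i).natDegree = 0 := by rw [hieq, hdeg s le_rfl, hns]
      cases v with
      | zero =>
        have hlcc : (g i).leadingCoeff = (g i).coeff 0 := by
          rw [Polynomial.leadingCoeff, hd0]
        rw [← hlcc]
      | succ v =>
        have : (g i).coeff (v + 1) = 0 := coeff_eq_zero_of_natDegree_lt (by omega)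
        rw [this]; exact dvd_zero _
    | succ d ihd =>
      intro i his hsi
      by_cases hsd : s ≤ i + d
      · exact ihd i his hsd
      have hilt : i < s := by omega
      have inner : ∀ e v, n i ≤ v + e → (g i).leadingCoeff ∣ (g i).coeff v := by
        intro e
        induction e with
        | zero =>
          intro v hv
          simp only [Nat.add_zero] at hv
          rcases Nat.eq_or_lt_of_le hv with heq | hlt
          · have hcv : (g i).coeff v = (g i).leadingCoeff := by
              rw [Polynomial.leadingCoeff, hdeg i his, heq]
            rw [hcv]
          · have : (g i).coeff v = 0 :=
              coeff_eq_zero_of_natDegree_lt (by rw [hdeg i his]; omega)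
            rw [this]; exact dvd_zero _
        | succ e ihe =>
          intro v hv
          by_cases hnv : n i ≤ v + e
          · exact ihe v hnv
          have hvlt : v < n i := by omega
          have hup : ∀ w, v < w → (g i).leadingCoeff ∣ (g i).coeff w := fun w hw =>
            ihe w (by omega)
          by_contra hndvd
          have hcV : (g i).coeff v ≠ 0 := fun h => hndvd (h ▸ dvd_zero _)
          have hex : ∃ j, j ≤ s ∧ n j ≤ v := ⟨s, le_rfl, by omega⟩
          set k := Nat.find hex with hk
          have hks : k ≤ s := (Nat.find_spec hex).1
          have hnk : n k ≤ v := (Nat.find_spec hex).2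
          have hik : i < k := by
            by_contra h
            push_neg at h
            have := nmono k i h his
            omega
          have hkdvd : ∀ w, (g k).leadingCoeff ∣ (g k).coeff w := fun w =>
            ihd k hks (by omega) w
          obtain ⟨Q, hQ⟩ := hchain i k (by omega) hks
          have hQne : Q ≠ 0 := by
            intro h; rw [h, mul_zero] at hQ; exact hMne k hks hQ
          set a := (g i).leadingCoeff with hadef
          set c := (g i).coeff v with hcdef
          set gc := EuclideanDomain.gcd a c with hgcdef
          set α := EuclideanDomain.gcdA a c with hα
          set β := EuclideanDomain.gcdB a c with hβ
          have hbez : gc = a * α + c * β := EuclideanDomain.gcd_eq_gcd_ab a c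
          have hgcne : gc ≠ 0 := fun h => hMne i his (EuclideanDomain.gcd_eq_zero_iff.mp h).1
          have hgcdeg : gc.natDegree < m i := by
            rcases Nat.lt_or_ge gc.natDegree (m i) with h | h
            · exact h
            · exfalso
              have hadvd : a ∣ gc := unit_quot a gc (hMne i his)
                (EuclideanDomain.gcd_dvd_left a c) (by rw [(hlc i his).2]; omega)
              exact hndvd (hadvd.trans (EuclideanDomain.gcd_dvd_right a c))
          have hgkdeg := hdeg k hks
          have hgklc : (g k).coeff (n k) = (g k).leadingCoeff := by
            rw [Polynomial.leadingCoeff, hgkdeg]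
          -- elimination: lower the degree below v while tracking coeff v modulo lc (g k)
          have elim : ∀ D0 : ℕ, ∀ f : Polynomial (Polynomial K), f ∈ I → f.natDegree ≤ D0 →
              (∀ w, v < w → (g k).leadingCoeff ∣ f.coeff w) →
              ∃ f', f' ∈ I ∧ f'.natDegree ≤ v ∧
                (g k).leadingCoeff ∣ (f'.coeff v - f.coeff v) := by
            intro D0
            induction D0 with
            | zero =>
              intro f hfI hfd _
              exact ⟨f, hfI, le_trans hfd (Nat.zero_le v), by simp⟩
            | succ D0 ihD =>
              intro f hfI hfd hfup
              by_cases hfv : f.natDegree ≤ v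
              · exact ⟨f, hfI, hfv, by simp⟩
              push_neg at hfv
              obtain ⟨q, hq⟩ := hfup f.natDegree hfv
              set t := f.natDegree - n k with htdef
              have hnkt : n k + t = f.natDegree := by omega
              set f₂ := f - C q * (g k * X ^ t) with hf₂
              have hf₂I : f₂ ∈ I :=
                I.sub_mem hfI (I.mul_mem_left _ (I.mul_mem_right _ (hmem k hks)))
              have hf₂c : ∀ w, f₂.coeff w
                  = f.coeff w - q * (if t ≤ w then (g k).coeff (w - t) else 0) := by
                intro w; rw [hf₂, coeff_sub, coeff_C_mul, coeff_mul_X_pow']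
              have hf₂deg : f₂.natDegree ≤ D0 := by
                have h1 : f₂.natDegree ≤ f.natDegree - 1 := by
                  rw [natDegree_le_iff_coeff_eq_zero]
                  intro N hN
                  have hN' : f.natDegree ≤ N := by omega
                  rcases Nat.eq_or_lt_of_le hN' with heq | hlt
                  · rw [hf₂c, if_pos (by omega), show N - t = n k from by omega, hgklc,
                      ← heq, hq]
                    ring
                  · rw [hf₂c]
                    have h0 : f.coeff N = 0 := coeff_eq_zero_of_natDegree_lt hlt
                    split_ifs with hT
                    · have h2 : (g k).coeff (N - t) = 0 :=
                        coeff_eq_zero_of_natDegree_lt (by rw [hgkdeg]; omega)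
                      rw [h0, h2]; ring
                    · rw [h0]; ring
                omega
              have hf₂up : ∀ w, v < w → (g k).leadingCoeff ∣ f₂.coeff w := by
                intro w hw
                rw [hf₂c]
                refine dvd_sub (hfup w hw) (Dvd.dvd.mul_left ?_ q)
                split_ifs with hT
                · exact hkdvd _
                · exact dvd_zero _
              obtain ⟨f', hf'I, hf'd, hf'c⟩ := ihD f₂ hf₂I hf₂deg hf₂up
              refine ⟨f', hf'I, hf'd, ?_⟩
              have h2 : (g k).leadingCoeff ∣ (f₂.coeff v - f.coeff v) := by
                rw [hf₂c]
                have h3 : f.coeff v - q * (if t ≤ v then (g k).coeff (v - t) else 0) - f.coeff v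
                    = -(q * (if t ≤ v then (g k).coeff (v - t) else 0)) := by ring
                rw [h3]
                refine dvd_neg.mpr (Dvd.dvd.mul_left ?_ q)
                split_ifs with hT
                · exact hkdvd _
                · exact dvd_zero _
              have h4 := dvd_add hf'c h2
              rwa [sub_add_sub_cancel] at h4
          set f₀ := C (Q * β) * g i with hf₀
          have hf₀I : f₀ ∈ I := I.mul_mem_left _ (hmem i his)
          have hf₀deg : f₀.natDegree ≤ n i :=
            le_trans (natDegree_C_mul_le _ _) (le_of_eq (hdeg i his))
          have hf₀up : ∀ w, v < w → (g k).leadingCoeff ∣ f₀.coeff w := by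
            intro w hw
            obtain ⟨tt, htt⟩ := hup w hw
            rw [hf₀, coeff_C_mul, htt]
            exact ⟨β * tt, by rw [hQ]; ring⟩
          obtain ⟨f₁, hf₁I, hf₁d, hf₁c⟩ := elim (n i) f₀ hf₀I hf₀deg hf₀up
          obtain ⟨e, he⟩ := hf₁c
          have hf₀cv : f₀.coeff v = Q * β * c := by
            rw [hf₀, coeff_C_mul, ← hcdef]
          set F := f₁ + C (α - e) * (g k * X ^ (v - n k)) with hF
          have hFI : F ∈ I :=
            I.add_mem hf₁I (I.mul_mem_left _ (I.mul_mem_right _ (hmem k hks)))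
          have hFdeg : F.natDegree ≤ v := by
            refine le_trans (natDegree_add_le _ _) (max_le hf₁d ?_)
            refine le_trans (natDegree_C_mul_le _ _) (le_trans natDegree_mul_le ?_)
            rw [hgkdeg, natDegree_X_pow]; omega
          have hFc : F.coeff v = Q * gc := by
            rw [hF, coeff_add, coeff_C_mul, coeff_mul_X_pow', if_pos (Nat.sub_le _ _),
              Nat.sub_sub_self hnk, hgklc]
            have he' : f₁.coeff v = Q * β * c + (g k).leadingCoeff * e := by
              rw [hf₀cv] at he; linear_combination he
            rw [he', hQ, hbez]; ring
          have hFne : F.coeff v ≠ 0 := by rw [hFc]; exact mul_ne_zero hQne hgcne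
          have hF0 : F ≠ 0 := fun h => hFne (by rw [h, coeff_zero])
          have hFdeg' : F.natDegree = v := le_antisymm hFdeg (le_natDegree_of_ne_zero hFne)
          have hFlc : F.leadingCoeff = Q * gc := by rw [Polynomial.leadingCoeff, hFdeg', hFc]
          obtain ⟨j, hjs, hjm, hjn⟩ := hGB F hFI hF0
          rw [hFdeg'] at hjn
          have hkj : k ≤ j := by
            by_contra h
            push_neg at h
            exact Nat.find_min hex (by rw [← hk]; exact h) ⟨hjs, hjn⟩
          have hQdeg : m k = m i + Q.natDegree := by
            have h5 := congrArg natDegree hQ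
            rwa [natDegree_mul (hMne i his) hQne, (hlc i his).2, (hlc k hks).2] at h5
          have hjmk : m k ≤ m j := mmono k j hkj hjs
          rw [hFlc, natDegree_mul hQne hgcne] at hjm
          omega
      intro v
      exact inner (n i) v (by omega)
  have hdvdall : ∀ i, i ≤ s → ∀ v, (g i).leadingCoeff ∣ (g i).coeff v :=
    fun i hi v => key s i hi (by omega) v
  -- define D via division by the (monic) previous leading coefficient
  set D : ℕ → Polynomial K := fun j => (g j).leadingCoeff /ₘ (g (j - 1)).leadingCoeff with hD
  have hDspec : ∀ j, 1 ≤ j → j ≤ s →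
      (g (j - 1)).leadingCoeff * D j = (g j).leadingCoeff := by
    intro j h1 hj
    have hmon : ((g (j - 1)).leadingCoeff).Monic := (hlc (j - 1) (by omega)).1
    have hdvd : (g (j - 1)).leadingCoeff ∣ (g j).leadingCoeff :=
      hchain (j - 1) j (by omega) hj
    have h0 : (g j).leadingCoeff %ₘ (g (j - 1)).leadingCoeff = 0 :=
      (Polynomial.modByMonic_eq_zero_iff_dvd hmon).mpr hdvd
    have h2 := Polynomial.modByMonic_add_div ((g j).leadingCoeff) ((g (j - 1)).leadingCoeff)
    rw [h0, zero_add] at h2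
    exact h2
  have hprod : ∀ i, i ≤ s → ∏ j ∈ Finset.Icc 1 i, D j = (g i).leadingCoeff := by
    intro i
    induction i with
    | zero =>
      intro _
      rw [show Finset.Icc 1 0 = (∅ : Finset ℕ) from Finset.Icc_eq_empty (by omega),
        Finset.prod_empty]
      have h1 := (hlc 0 (Nat.zero_le s)).1
      have h2 : ((g 0).leadingCoeff).natDegree = 0 := by rw [(hlc 0 (Nat.zero_le s)).2, hm0]
      exact ((Polynomial.Monic.natDegree_eq_zero h1).mp h2).symm
    | succ i ih =>
      intro hi
      rw [Finset.prod_Icc_succ_top (by omega), ih (by omega)]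
      have h3 := hDspec (i + 1) (by omega) hi
      simpa using h3
  have hDprop : ∀ j, 1 ≤ j → j ≤ s → (D j).Monic ∧ (D j).natDegree = m j - m (j - 1) := by
    intro j h1 hj
    have hspec := hDspec j h1 hj
    have hmonp : ((g (j - 1)).leadingCoeff).Monic := (hlc (j - 1) (by omega)).1
    have hDne : D j ≠ 0 := by
      intro h
      rw [h, mul_zero] at hspec
      exact hMne j hj hspec.symm
    have hlcD : (D j).leadingCoeff = 1 := by
      have h4 := congrArg Polynomial.leadingCoeff hspec
      rw [Polynomial.leadingCoeff_mul, hmonp.leadingCoeff, one_mul, (hlc j hj).1.leadingCoeff]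
        at h4
      exact h4
    have hdegD : (D j).natDegree = m j - m (j - 1) := by
      have h5 := congrArg Polynomial.natDegree hspec
      rw [Polynomial.natDegree_mul hmonp.ne_zero hDne, (hlc (j - 1) (by omega)).2,
        (hlc j hj).2] at h5
      have h6 := mmono (j - 1) j (by omega) hj
      omega
    exact ⟨hlcD, hdegD⟩
  refine ⟨D, fun i h1 h2 => hDprop i h1 h2, ?_, ?_, ?_⟩
  · intro i hi
    have hdv : Polynomial.C ((g i).leadingCoeff) ∣ g i :=
      (Polynomial.C_dvd_iff_dvd_coeff _ _).mpr (hdvdall i hi)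
    obtain ⟨G, hG⟩ := hdv
    have hGne : G ≠ 0 := by
      rintro rfl
      rw [mul_zero] at hG
      exact hgne i hi hG
    have hCne : (Polynomial.C ((g i).leadingCoeff) : Polynomial (Polynomial K)) ≠ 0 := by
      simpa using hMne i hi
    have hdeg' : G.natDegree = n i := by
      have h7 := congrArg Polynomial.natDegree hG
      rw [Polynomial.natDegree_mul hCne hGne, Polynomial.natDegree_C, hdeg i hi] at h7
      omega
    have hmonG : G.Monic := by
      have h8 := congrArg Polynomial.leadingCoeff hG
      rw [Polynomial.leadingCoeff_mul, Polynomial.leadingCoeff_C] at h8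
      have h9 : (g i).leadingCoeff * 1 = (g i).leadingCoeff * G.leadingCoeff := by
        rw [mul_one]; exact h8
      exact (mul_left_cancel₀ (hMne i hi) h9).symm
    exact ⟨G, hmonG, hdeg', by rw [hprod i hi]; exact hG⟩
  · rw [hprod s le_rfl]
    have h10 : (g s).natDegree = 0 := by rw [hdeg s le_rfl, hns]
    have h12 : (g s).leadingCoeff = (g s).coeff 0 := by rw [Polynomial.leadingCoeff, h10]
    rw [h12]
    exact Polynomial.eq_C_of_natDegree_eq_zero h10
  · intro i hi
    rw [hprod i hi, Polynomial.leadingCoeff, ← hdeg i hi]
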